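/- Let n ∈ ℕ, κ ∈ {1, …, n−1}, and for z ∈ ℝ^n set K_cc(z) := {λ ∈ ℝ^n | Σ_i λ_i ≥ n − κ, 0 ≤ λ_i ≤ 1 for all i, z_i λ_i = 0 for all i}. If K_cc(z) is nonempty, then K_cc(z) is a singleton if and only if the number of indices i with z_i ≠ 0 equals κ; moreover, K_cc(z) is nonempty if and only if the number of indices i with z_i ≠ 0 is at most κ. -/
import Mathlib


open Filter Metric Set Bornology
open scoped RealInnerProductSpace Topology Pointwise

noncomputable section

/-- The Bouligand tangent cone to `Ω` at `x`: `w` belongs to it iff there are `t k ↓ 0`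
(positive) and `v k → w` with `x + t k • v k ∈ Ω` for all `k`. -/
def bouligandTangentCone {E : Type*} [NormedAddCommGroup E] [NormedSpace ℝ E]
    (Ω : Set E) (x : E) : Set E :=
  {w | ∃ (t : ℕ → ℝ) (v : ℕ → E), (∀ k, 0 < t k) ∧
    Tendsto t atTop (𝓝 0) ∧ Tendsto v atTop (𝓝 w) ∧ ∀ k, x + t k • v k ∈ Ω}

/-- The regular (Fréchet) normal cone, defined as the polar of the Bouligand tangent cone. -/
def regNormalCone {E : Type*} [NormedAddCommGroup E] [InnerProductSpace ℝ E]
    (Ω : Set E) (x : E) : Set E :=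
  {ζ | ∀ w ∈ bouligandTangentCone Ω x, ⟪ζ, w⟫ ≤ 0}

/-- The regular (Fréchet) normal cone for subsets of a product of inner product spaces,
using the natural pairing on the product. -/
def regNormalConeProd {E F : Type*} [NormedAddCommGroup E] [InnerProductSpace ℝ E]
    [NormedAddCommGroup F] [InnerProductSpace ℝ F]
    (Ω : Set (E × F)) (p : E × F) : Set (E × F) :=
  {ζ | ∀ q ∈ bouligandTangentCone Ω p, ⟪ζ.1, q.1⟫ + ⟪ζ.2, q.2⟫ ≤ 0}

/-- The domain of a set-valued mapping: the points with nonempty image. -/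
def svDom {E F : Type*} (K : E → Set F) : Set E := {z | (K z).Nonempty}

/-- The graph of a set-valued mapping. -/
def svGraph {E F : Type*} (K : E → Set F) : Set (E × F) := {p | p.2 ∈ K p.1}

/-- `K` is inner semicompact at `zb` w.r.t. its domain: for every sequence in `dom K`
converging to `zb` there is a selection of images possessing a bounded subsequence. -/
def InnerSemicompactAt {E F : Type*} [TopologicalSpace E] [Bornology F]
    (K : E → Set F) (zb : E) : Prop :=
  ∀ zs : ℕ → E, (∀ k, zs k ∈ svDom K) → Tendsto zs atTop (𝓝 zb) →
    ∃ ls : ℕ → F, (∀ k, ls k ∈ K (zs k)) ∧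
      ∃ φ : ℕ → ℕ, StrictMono φ ∧ IsBounded (Set.range (ls ∘ φ))

/-- `K` is inner calm* in the fuzzy sense at `zb` w.r.t. its domain. -/
def InnerCalmStarFuzzyAt {E F : Type*} [NormedAddCommGroup E] [NormedSpace ℝ E]
    [NormedAddCommGroup F] (K : E → Set F) (zb : E) : Prop :=
  ∀ d ∈ bouligandTangentCone (svDom K) zb, ‖d‖ = 1 →
    ∃ κ > (0 : ℝ), ∃ lb : F, ∃ (t : ℕ → ℝ) (ds : ℕ → E) (ls : ℕ → F),
      (∀ k, 0 < t k) ∧ Tendsto t atTop (𝓝 0) ∧ Tendsto ds atTop (𝓝 d) ∧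
      Tendsto ls atTop (𝓝 lb) ∧
      ∀ k, ls k ∈ K (zb + t k • ds k) ∧ ‖ls k - lb‖ ≤ κ * t k * ‖ds k‖

/-- For the mapping `K_cc` of the complementarity-type reformulation of the cardinality
constraint: `K_cc z` is a singleton (given it is nonempty) iff `‖z‖₀ = κ`, and `K_cc z`
is nonempty iff `‖z‖₀ ≤ κ`. -/
theorem stmt_19 {n : ℕ} (κ : ℕ) (hκ1 : 1 ≤ κ) (hκ2 : κ ≤ n - 1) (z : Fin n → ℝ) :
    ∀ Kcc : Set (Fin n → ℝ),
      Kcc = {lam | ((n : ℝ) - κ) ≤ ∑ i, lam i ∧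
        (∀ i, 0 ≤ lam i ∧ lam i ≤ 1) ∧ ∀ i, z i * lam i = 0} →
      (Kcc.Nonempty → ((∃ lam, Kcc = {lam}) ↔ {i | z i ≠ 0}.ncard = κ)) ∧
      (Kcc.Nonempty ↔ {i | z i ≠ 0}.ncard ≤ κ) := by
  intro Kcc hK
  classical
  set s : Finset (Fin n) := Finset.univ.filter (fun i => z i ≠ 0) with hs
  have hncard : {i | z i ≠ 0}.ncard = s.card := by
    rw [Set.ncard_eq_toFinset_card']
    congr 1
    ext i; simp [hs]
  have hsn : s.card ≤ n := by simpa using s.card_le_univ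
  have hκn : κ < n := by omega
  have hcardc : (sᶜ.card : ℝ) = (n : ℝ) - s.card := by
    rw [Finset.card_compl]
    simp [Nat.cast_sub hsn]
  -- canonical element
  set lamS : Fin n → ℝ := fun i => if z i = 0 then 1 else 0 with hlamS
  have hsum_lamS : ∑ i, lamS i = (n : ℝ) - s.card := by
    rw [hlamS]
    rw [Finset.sum_boole]
    rw [← hcardc]
    congr 2
    ext i; simp [hs]
  -- membership criterion facts
  have hzero : ∀ lam ∈ Kcc, ∀ i ∈ s, lam i = 0 := by
    intro lam hlam i hi
    rw [hK] at hlam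
    have hzi : z i ≠ 0 := by simpa [hs] using hi
    have := hlam.2.2 i
    exact (mul_eq_zero.1 this).resolve_left hzi
  have hsum_split : ∀ lam ∈ Kcc, ∑ i, lam i = ∑ i ∈ sᶜ, lam i := by
    intro lam hlam
    rw [← Finset.sum_compl_add_sum s lam]
    rw [Finset.sum_eq_zero (hzero lam hlam), add_zero]
  have hub : ∀ lam ∈ Kcc, ∑ i, lam i ≤ (n : ℝ) - s.card := by
    intro lam hlam
    rw [hsum_split lam hlam, ← hcardc]
    calc ∑ i ∈ sᶜ, lam i ≤ ∑ i ∈ sᶜ, (1 : ℝ) := by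
          apply Finset.sum_le_sum
          intro i _
          have := hlam; rw [hK] at this
          exact (this.2.1 i).2
      _ = (sᶜ.card : ℝ) := by simp
  have hmemS : s.card ≤ κ → lamS ∈ Kcc := by
    intro hle
    rw [hK]
    refine ⟨?_, ?_, ?_⟩
    · rw [hsum_lamS]
      have : (s.card : ℝ) ≤ κ := by exact_mod_cast hle
      linarith
    · intro i; by_cases h : z i = 0 <;> simp [hlamS, h]
    · intro i; by_cases h : z i = 0 <;> simp [hlamS, h]
  have hne_iff : Kcc.Nonempty ↔ s.card ≤ κ := by
    constructor
    · rintro ⟨lam, hlam⟩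
      have h1 := hub lam hlam
      have h2 : ((n : ℝ) - κ) ≤ ∑ i, lam i := by rw [hK] at hlam; exact hlam.1
      have : (s.card : ℝ) ≤ (κ : ℝ) := by linarith
      exact_mod_cast this
    · intro h; exact ⟨lamS, hmemS h⟩
  constructor
  · intro hne
    have hle : s.card ≤ κ := hne_iff.1 hne
    rw [hncard]
    constructor
    · rintro ⟨lam, hlamsingle⟩
      by_contra hneq
      have hlt : s.card < κ := lt_of_le_of_ne hle hneq
      -- sᶜ is nonempty
      have hcne : sᶜ.Nonempty := by
        rw [← Finset.card_pos, Finset.card_compl]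
        simp only [Fintype.card_fin]
        omega
      obtain ⟨j, hj⟩ := hcne
      have hzj : z j = 0 := by
        simp [hs, Finset.mem_compl] at hj; exact hj
      set lam2 : Fin n → ℝ := Function.update lamS j 0 with hlam2
      have hmem2 : lam2 ∈ Kcc := by
        rw [hK]
        refine ⟨?_, ?_, ?_⟩
        · have hsum2 : ∑ i, lam2 i = ∑ i, lamS i - lamS j := by
            rw [hlam2, Finset.sum_update_of_mem (Finset.mem_univ j),
              Finset.sdiff_singleton_eq_erase,
              Finset.sum_erase_eq_sub (Finset.mem_univ j)]
            ring
          rw [hsum2, hsum_lamS, hlamS]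
          simp only [if_pos hzj]
          have : (s.card : ℝ) + 1 ≤ κ := by exact_mod_cast hlt
          linarith
        · intro i
          by_cases h : i = j
          · subst h; simp [hlam2]
          · rw [hlam2, Function.update_of_ne h]
            by_cases h2 : z i = 0 <;> simp [hlamS, h2]
        · intro i
          by_cases h : i = j
          · subst h; simp [hlam2]
          · rw [hlam2, Function.update_of_ne h]
            by_cases h2 : z i = 0 <;> simp [hlamS, h2]
      have hmem1 : lamS ∈ Kcc := hmemS hle
      rw [hlamsingle] at hmem1 hmem2
      have : lamS = lam2 := by
        rw [Set.mem_singleton_iff] at hmem1 hmem2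
        rw [hmem1, hmem2]
      have h1 : lamS j = 1 := by simp [hlamS, hzj]
      have h2 : lam2 j = 0 := by simp [hlam2]
      rw [this, h2] at h1
      norm_num at h1
    · intro hcard
      refine ⟨lamS, ?_⟩
      apply Set.eq_singleton_iff_unique_mem.2
      refine ⟨hmemS hle, ?_⟩
      intro lam hlam
      have hlam' := hlam; rw [hK] at hlam'
      have hsumge : ((n : ℝ) - κ) ≤ ∑ i ∈ sᶜ, lam i := by
        rw [← hsum_split lam hlam]; exact hlam'.1
      have hones : ∀ i ∈ sᶜ, lam i = 1 := by
        have hsum0 : ∑ i ∈ sᶜ, (1 - lam i) ≤ 0 := by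
          rw [Finset.sum_sub_distrib]
          simp only [Finset.sum_const, nsmul_eq_mul, mul_one]
          rw [hcardc, hcard]
          linarith
        have hnn : ∀ i ∈ sᶜ, (0 : ℝ) ≤ 1 - lam i := by
          intro i _
          have := (hlam'.2.1 i).2
          linarith
        have heq0 : ∑ i ∈ sᶜ, (1 - lam i) = 0 :=
          le_antisymm hsum0 (Finset.sum_nonneg hnn)
        intro i hi
        have := (Finset.sum_eq_zero_iff_of_nonneg hnn).1 heq0 i hi
        linarith
      funext i
      by_cases h : z i = 0
      · have hi : i ∈ sᶜ := by simp [hs, h]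
        rw [hones i hi]; simp [hlamS, h]
      · have hi : i ∈ s := by simp [hs, h]
        rw [hzero lam hlam i hi]; simp [hlamS, h]
  · rw [hne_iff, hncard]
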